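/- Let λ₁ ≤ λ₂ ≤ ... ≤ λ_N be real numbers and let ω₁,...,ω_N be nonnegative weights with ω_α ≤ Ω for all α and ∑ω_α = S. Then for any integer 1 ≤ m ≤ N with S ≥ mΩ, we have ∑_{α=1}^N ω_α λ_α ≥ (S − mΩ)λ_{m+1} + Ω ∑_{α=1}^m λ_α. -/

import Mathlib

open Finset

/-- Weighted-sum estimation principle (NPW Lemma 3.4): for a nondecreasing
sequence `λ` and weights `ω α ∈ [0, Ω]` with total weight `S`, for any
`1 ≤ m ≤ N` with `S ≥ m·Ω`,
`∑ ω_α λ_α ≥ (S − mΩ) λ_{m+1} + Ω ∑_{α=1}^m λ_α` (0-indexed). -/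
theorem weighted_sum_lower_bound (N m : ℕ) (lam ω : ℕ → ℝ)
    (hmono : Monotone lam)
    (hω0 : ∀ α, 0 ≤ ω α) (hωΩ : ∀ α, ω α ≤ Ω)
    (hS : ∑ α ∈ range N, ω α = S)
    (hm1 : 1 ≤ m) (hmN : m ≤ N) (hSm : (m : ℝ) * Ω ≤ S) :
    (S - m * Ω) * lam m + Ω * ∑ α ∈ range m, lam α ≤ ∑ α ∈ range N, ω α * lam α := by
  subst hS
  set A := ∑ α ∈ range m, ω α with hA
  have hsplit : ∑ α ∈ range m, ω α + ∑ α ∈ Ico m N, ω α = ∑ α ∈ range N, ω α :=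
    Finset.sum_range_add_sum_Ico _ hmN
  have hsplit2 : ∑ α ∈ range m, ω α * lam α + ∑ α ∈ Ico m N, ω α * lam α
      = ∑ α ∈ range N, ω α * lam α :=
    Finset.sum_range_add_sum_Ico _ hmN
  have h2 : Ω * ∑ α ∈ range m, lam α + (A - m * Ω) * lam m
      ≤ ∑ α ∈ range m, ω α * lam α := by
    have hterm : ∀ α ∈ range m, Ω * lam α + (ω α - Ω) * lam m ≤ ω α * lam α := by
      intro α hα
      have hαm : lam α ≤ lam m := hmono (le_of_lt (mem_range.mp hα))
      nlinarith [hωΩ α]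
    calc Ω * ∑ α ∈ range m, lam α + (A - m * Ω) * lam m
        = ∑ α ∈ range m, (Ω * lam α + (ω α - Ω) * lam m) := by
          rw [Finset.sum_add_distrib, Finset.mul_sum]
          congr 1
          rw [← Finset.sum_mul, Finset.sum_sub_distrib, Finset.sum_const,
            Finset.card_range, nsmul_eq_mul, ← hA]
      _ ≤ ∑ α ∈ range m, ω α * lam α := Finset.sum_le_sum hterm
  have h3 : (∑ α ∈ range N, ω α - A) * lam m ≤ ∑ α ∈ Ico m N, ω α * lam α := by
    have hterm : ∀ α ∈ Ico m N, ω α * lam m ≤ ω α * lam α := by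
      intro α hα
      exact mul_le_mul_of_nonneg_left (hmono (mem_Ico.mp hα).1) (hω0 α)
    calc (∑ α ∈ range N, ω α - A) * lam m = ∑ α ∈ Ico m N, ω α * lam m := by
          rw [← Finset.sum_mul]
          congr 1
          linarith [hsplit]
      _ ≤ ∑ α ∈ Ico m N, ω α * lam α := Finset.sum_le_sum hterm
  linarith [h2, h3, hsplit2]
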